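/- Let p > 1 with conjugate exponent q = p/(p−1), α > 0, ε > 0, T ∈ (0,∞], let E : ℝ^d → ℝ be convex with α|x|^p − 1/α ≤ E(x) for all x ∈ ℝ^d, and let f : (0,T) → ℝ^d be measurable with ∫_0^T e^{-t/ε} |f(t)|^q dt < ∞. Define the admissible class 𝒦 of measurable u : (0,T) → ℝ^d such that ∫_0^T e^{-t/ε} |u(t)|^p dt < ∞ and t ↦ e^{-t/ε} E(u(t)) is integrable, and the WIDE functional W^ε(u) = ∫_0^T e^{-t/ε} ( E(u(t)) − f(t)·u(t) ) dt on 𝒦. Then (a) W^ε attains its minimum on 𝒦, and (b) every minimizer u of W^ε on 𝒦 satisfies, for almost every t ∈ (0,T), the subdifferential inclusion E(v) ≥ E(u(t)) + f(t)·(v − u(t)) for all v ∈ ℝ^d. -/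

import Mathlib

open scoped RealInnerProductSpace
open MeasureTheory Set Filter Topology

section WideHelpers

variable {d : ℕ}

local notation "V" => EuclideanSpace ℝ (Fin d)


lemma wide_exists_min_on_closed {h : EuclideanSpace ℝ (Fin d) → ℝ} {a c pp : ℝ}
    (ha : 0 < a) (hpp : 1 ≤ pp) (hcont : Continuous h)
    (hbd : ∀ x : V, a * ‖x‖ ^ pp - c ≤ h x)
    {C : Set (EuclideanSpace ℝ (Fin d))} (hC : IsClosed C) (hne : C.Nonempty) :
    ∃ z ∈ C, ∀ y ∈ C, h z ≤ h y := by
  obtain ⟨x₀, hx₀⟩ := hne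
  set R : ℝ := max (max 1 ((h x₀ + c) / a + 1)) ‖x₀‖ with hR
  have hR1 : (1:ℝ) ≤ R := le_trans (le_max_left _ _) (le_max_left _ _)
  have hRx : ‖x₀‖ ≤ R := le_max_right _ _
  have hRb : (h x₀ + c) / a + 1 ≤ R := le_trans (le_max_right _ _) (le_max_left _ _)
  have hK : IsCompact (C ∩ Metric.closedBall (0:V) R) :=
    (isCompact_closedBall (0:V) R).inter_left hC
  have hKne : (C ∩ Metric.closedBall (0:V) R).Nonempty :=
    ⟨x₀, hx₀, by simpa [Metric.mem_closedBall, dist_eq_norm] using hRx⟩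
  obtain ⟨z, hz, hzmin⟩ := hK.exists_isMinOn hKne hcont.continuousOn
  refine ⟨z, hz.1, fun y hy => ?_⟩
  rcases le_or_gt ‖y‖ R with hyR | hyR
  · exact hzmin ⟨hy, by simpa [Metric.mem_closedBall, dist_eq_norm] using hyR⟩
  · have h1 : ‖y‖ ≤ ‖y‖ ^ pp := by
      calc ‖y‖ = ‖y‖ ^ (1:ℝ) := (Real.rpow_one _).symm
      _ ≤ ‖y‖ ^ pp := Real.rpow_le_rpow_of_exponent_le (le_trans hR1 hyR.le) hpp
    have h2 : h x₀ < h y := by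
      have hb := hbd y
      have hb' : a * ‖y‖ - c ≤ h y := le_trans (by nlinarith) hb
      have haR : h x₀ + c + a ≤ a * R := by
        rw [div_add' _ _ _ ha.ne', div_le_iff₀ ha] at hRb
        linarith [hRb]
      nlinarith
    exact le_of_lt (lt_of_le_of_lt (hzmin ⟨hx₀, by
      simpa [Metric.mem_closedBall, dist_eq_norm] using hRx⟩) h2)

lemma wide_mid_norm_sq (x y : V) :
    ‖(1/2:ℝ) • x + (1/2:ℝ) • y‖ ^ 2
      = (‖x‖ ^ 2 + ‖y‖ ^ 2) / 2 - ‖(1/2:ℝ) • (x - y)‖ ^ 2 := by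
  have hpar := parallelogram_law_with_norm ℝ ((1/2:ℝ) • x) ((1/2:ℝ) • y)
  have h1 : ‖(1/2:ℝ) • x‖ = (1/2:ℝ) * ‖x‖ := by rw [norm_smul]; simp
  have h2 : ‖(1/2:ℝ) • y‖ = (1/2:ℝ) * ‖y‖ := by rw [norm_smul]; simp
  rw [h1, h2] at hpar
  rw [smul_sub]
  nlinarith [hpar]

lemma wide_selection (p a : ℝ) (hp : 1 ≤ p) (ha : 0 < a)
    (E : EuclideanSpace ℝ (Fin d) → ℝ) (hconv : ConvexOn ℝ Set.univ E) (hcont : Continuous E)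
    (f : ℝ → EuclideanSpace ℝ (Fin d)) (hfmeas : Measurable f) (c : ℝ → ℝ)
    (hbd : ∀ (t : ℝ) (x : V), a * ‖x‖ ^ p - c t ≤ E x - ⟪f t, x⟫) :
    ∃ w : ℝ → EuclideanSpace ℝ (Fin d), Measurable w ∧
      ∀ (t : ℝ) (x : V), E (w t) - ⟪f t, w t⟫ ≤ E x - ⟪f t, x⟫ := by
  classical
  set F : ℝ → V → ℝ := fun t x => E x - ⟪f t, x⟫ with hF
  have hFcont : ∀ t, Continuous (F t) :=
    fun t => hcont.sub (continuous_const.inner continuous_id)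
  have hFmeas : ∀ x : V, Measurable fun t => F t x := fun x =>
    measurable_const.sub (((continuous_id.inner continuous_const).measurable).comp hfmeas)
  have hFmid : ∀ t (x y : V), F t ((1/2:ℝ) • x + (1/2:ℝ) • y) ≤ (F t x + F t y) / 2 := by
    intro t x y
    have hE := hconv.2 (mem_univ x) (mem_univ y)
      (by norm_num : (0:ℝ) ≤ 1/2) (by norm_num : (0:ℝ) ≤ 1/2) (by norm_num)
    have hi : ⟪f t, (1/2:ℝ) • x + (1/2:ℝ) • y⟫
        = (1/2) * ⟪f t, x⟫ + (1/2) * ⟪f t, y⟫ := by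
      rw [inner_add_right, real_inner_smul_right, real_inner_smul_right]
    simp only [hF, smul_eq_mul] at hE ⊢
    rw [hi]; linarith
  -- the penalization parameters
  set γ : ℕ → ℝ := fun n => ((n:ℝ) + 1)⁻¹ with hγ
  have hγpos : ∀ n, 0 < γ n := fun n => by positivity
  have hγ0 : Tendsto γ atTop (𝓝 0) := by
    have := tendsto_one_div_add_atTop_nhds_zero_nat (𝕜 := ℝ)
    simpa [hγ, one_div] using this
  set H : ℕ → ℝ → V → ℝ := fun n t x => F t x + γ n * ‖x‖ ^ 2 with hH
  have hHcont : ∀ n t, Continuous (H n t) :=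
    fun n t => (hFcont t).add (continuous_const.mul (continuous_norm.pow 2))
  have hHmeas : ∀ n (x : V), Measurable fun t => H n t x := fun n x =>
    (hFmeas x).add measurable_const
  have hHbd : ∀ n t (x : V), a * ‖x‖ ^ p - c t ≤ H n t x := fun n t x =>
    le_trans (hbd t x) (le_add_of_nonneg_right (mul_nonneg (hγpos n).le (by positivity)))
  have hHmid : ∀ n t (x y : V), H n t ((1/2:ℝ) • x + (1/2:ℝ) • y)
      ≤ (H n t x + H n t y) / 2 - γ n * ‖(1/2:ℝ) • (x - y)‖ ^ 2 := by
    intro n t x y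
    have h1 := hFmid t x y
    have h2 := wide_mid_norm_sq x y
    have h3 : γ n * ‖(1/2:ℝ) • x + (1/2:ℝ) • y‖ ^ 2
        = γ n * ((‖x‖ ^ 2 + ‖y‖ ^ 2) / 2 - ‖(1/2:ℝ) • (x - y)‖ ^ 2) := by rw [h2]
    simp only [hH]
    rw [h3]; ring_nf; nlinarith [hγpos n]
  have hHex : ∀ n t, ∃ z : V, ∀ x, H n t z ≤ H n t x := by
    intro n t
    obtain ⟨z, _, hz⟩ := wide_exists_min_on_closed ha hp (hHcont n t) (hHbd n t)
      isClosed_univ (univ_nonempty)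
    exact ⟨z, fun x => hz x (mem_univ x)⟩
  have hHuniq : ∀ n t (z z' : V), (∀ x, H n t z ≤ H n t x) → (∀ x, H n t z' ≤ H n t x) →
      z = z' := by
    intro n t z z' hz hz'
    by_contra hne
    have h0 : 0 < ‖(1/2:ℝ) • (z - z')‖ ^ 2 := by
      have h' : (1/2:ℝ) • (z - z') ≠ 0 := smul_ne_zero (by norm_num) (sub_ne_zero.2 hne)
      exact pow_pos (norm_pos_iff.2 h') 2
    have hm := hHmid n t z z'
    have h1 := hz ((1/2:ℝ) • z + (1/2:ℝ) • z')
    have h3 := hz z'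
    have h4 := hz' z
    have hs : 0 < γ n * ‖(1/2:ℝ) • (z - z')‖ ^ 2 := mul_pos (hγpos n) h0
    clear_value H
    linarith [hm, h1, h4, hs]
  set U : ℕ → ℝ → V := fun n t => Classical.choose (hHex n t) with hUdef
  have hU : ∀ n t (x : V), H n t (U n t) ≤ H n t x := fun n t => Classical.choose_spec (hHex n t)
  have hbd' : ∀ (t : ℝ) (x : V), a * ‖x‖ ^ p - c t ≤ F t x := hbd
  clear_value F H U
  -- measurability of the approximate minimizers
  have hUmeas : ∀ n, Measurable (U n) := by
    intro n
    apply measurable_of_isClosed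
    intro C hC
    rcases eq_empty_or_nonempty C with rfl | hne
    · simp
    · haveI : Nonempty C := hne.to_subtype
      obtain ⟨sC, hsC⟩ := TopologicalSpace.exists_dense_seq C
      obtain ⟨D, hD⟩ := TopologicalSpace.exists_dense_seq (EuclideanSpace ℝ (Fin d))
      have hset : (U n) ⁻¹' C = ⋂ (j : ℕ), ⋂ (i : ℕ), ⋃ (k : ℕ),
          {t : ℝ | H n t ((sC k : V)) < H n t (D j) + ((i:ℝ) + 1)⁻¹} := by
        ext t
        simp only [mem_preimage, mem_iInter, mem_iUnion, mem_setOf_eq]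
        constructor
        · intro hz j i
          obtain ⟨δ, hδ, hδ'⟩ := Metric.continuousAt_iff.1 (hHcont n t).continuousAt
            (((i:ℝ) + 1)⁻¹) (by positivity)
          obtain ⟨k, hk⟩ := Metric.denseRange_iff.1 hsC ⟨U n t, hz⟩ δ hδ
          refine ⟨k, ?_⟩
          have hdist : dist ((sC k : V)) (U n t) < δ := by
            rw [dist_comm]; exact hk
          have habs := hδ' hdist
          rw [Real.dist_eq] at habs
          have h1 : H n t ((sC k : V)) < H n t (U n t) + ((i:ℝ) + 1)⁻¹ := by
            rcases abs_lt.1 habs with ⟨hl, hr⟩; linarith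
          exact lt_of_lt_of_le h1 (by linarith [hU n t (D j)])
        · intro hh
          obtain ⟨x₀, hx₀C, hx₀⟩ := wide_exists_min_on_closed ha hp (hHcont n t) (hHbd n t) hC hne
          have key : ∀ j, H n t x₀ ≤ H n t (D j) := by
            intro j
            refine le_of_forall_pos_le_add fun ε hε => ?_
            obtain ⟨i, hi⟩ := exists_nat_gt (1/ε)
            obtain ⟨k, hk⟩ := hh j i
            have hiε : ((i:ℝ) + 1)⁻¹ ≤ ε := by
              rw [inv_le_comm₀ (by positivity) hε]
              rw [one_div] at hi
              calc ε⁻¹ ≤ (i:ℝ) := hi.le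
              _ ≤ (i:ℝ) + 1 := by linarith
            have : H n t x₀ < H n t (D j) + ε :=
              calc H n t x₀ ≤ H n t ((sC k : V)) := hx₀ _ (sC k).2
              _ < H n t (D j) + ((i:ℝ) + 1)⁻¹ := hk
              _ ≤ H n t (D j) + ε := by linarith
            exact this.le
          have hglob : ∀ x, H n t x₀ ≤ H n t x := by
            intro x
            refine le_of_forall_pos_le_add fun ε hε => ?_
            obtain ⟨δ, hδ, hδ'⟩ := Metric.continuousAt_iff.1 (hHcont n t).continuousAt ε hε
            obtain ⟨j, hj⟩ := Metric.denseRange_iff.1 hD x δ hδ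
            have habs := hδ' (show dist (D j) x < δ by rw [dist_comm]; exact hj)
            rw [Real.dist_eq] at habs
            have h1 : H n t (D j) < H n t x + ε := by
              rcases abs_lt.1 habs with ⟨hl, hr⟩; linarith
            linarith [key j]
          have hxU : x₀ = U n t := hHuniq n t x₀ (U n t) hglob (hU n t)
          rw [← hxU]; exact hx₀C
      rw [hset]
      exact MeasurableSet.iInter fun j => MeasurableSet.iInter fun i =>
        MeasurableSet.iUnion fun k =>
          measurableSet_lt (hHmeas n _) ((hHmeas n _).add_const _)
  -- convergence of the approximate minimizers
  have hHF : ∀ n t (x : V), H n t x = F t x + γ n * ‖x‖ ^ 2 := fun n t x => by rw [hH]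
  have hlim : ∀ t, ∃ z : V, (∀ x, F t z ≤ F t x) ∧
      Tendsto (fun n => U n t) atTop (𝓝 z) := by
    intro t
    obtain ⟨z₀, -, hz₀⟩ := wide_exists_min_on_closed ha hp (hFcont t) (hbd' t)
      isClosed_univ univ_nonempty
    replace hz₀ : ∀ x, F t z₀ ≤ F t x := fun x => hz₀ x (mem_univ x)
    set M : Set V := {x | ∀ y, F t x ≤ F t y} with hM
    have hMclosed : IsClosed M := by
      have : M = ⋂ y, {x : V | F t x ≤ F t y} := by ext x; simp [hM]
      rw [this]
      exact isClosed_iInter fun y => isClosed_le (hFcont t) continuous_const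
    have hMne : M.Nonempty := ⟨z₀, hz₀⟩
    obtain ⟨P, hPM, hPmin⟩ := wide_exists_min_on_closed (h := fun x : V => ‖x‖ ^ 2)
      (a := 1) (c := 0) (pp := 2) one_pos one_le_two (continuous_norm.pow 2)
      (fun x => by rw [Real.rpow_two]; norm_num) hMclosed hMne
    have hPM' : ∀ y, F t P ≤ F t y := hPM
    have hPuniq : ∀ b : V, (∀ y, F t b ≤ F t y) → ‖b‖ ^ 2 ≤ ‖P‖ ^ 2 → b = P := by
      intro b hbM hb
      by_contra hbne
      have hmidM : ((1/2:ℝ) • b + (1/2:ℝ) • P) ∈ M := by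
        intro y
        calc F t ((1/2:ℝ) • b + (1/2:ℝ) • P) ≤ (F t b + F t P) / 2 := hFmid t b P
        _ ≤ F t y := by linarith [hbM y, hPM' y]
      have h1 := hPmin _ hmidM
      have h2 := wide_mid_norm_sq b P
      have h3 : 0 < ‖(1/2:ℝ) • (b - P)‖ ^ 2 := by
        have h' : (1/2:ℝ) • (b - P) ≠ 0 := smul_ne_zero (by norm_num) (sub_ne_zero.2 hbne)
        exact pow_pos (norm_pos_iff.2 h') 2
      linarith
    have hUP : ∀ n, ‖U n t‖ ≤ ‖P‖ ∧ F t (U n t) ≤ F t P + γ n * ‖P‖ ^ 2 := by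
      intro n
      have h1 := hU n t P
      rw [hHF, hHF] at h1
      have h2 := hPM' (U n t)
      constructor
      · by_contra hcon
        push_neg at hcon
        have : ‖P‖ ^ 2 < ‖U n t‖ ^ 2 := by nlinarith [norm_nonneg P]
        nlinarith [hγpos n]
      · nlinarith [norm_nonneg (U n t), hγpos n, sq_nonneg ‖U n t‖]
    refine ⟨P, hPM', ?_⟩
    apply tendsto_of_subseq_tendsto
    intro ns hns
    have hball : ∀ k, U (ns k) t ∈ Metric.closedBall (0:V) ‖P‖ := fun k => by
      simpa [Metric.mem_closedBall, dist_eq_norm] using (hUP (ns k)).1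
    obtain ⟨b, hbcl, φ, hφ, hbtend⟩ :=
      tendsto_subseq_of_bounded Metric.isBounded_closedBall hball
    have hbball : b ∈ Metric.closedBall (0:V) ‖P‖ := by
      rwa [Metric.isClosed_closedBall.closure_eq] at hbcl
    have hns' : Tendsto (fun k => ns (φ k)) atTop atTop := hns.comp hφ.tendsto_atTop
    have hγtend : Tendsto (fun k => γ (ns (φ k))) atTop (𝓝 0) := hγ0.comp hns'
    have hFtend : Tendsto (fun k => F t (U (ns (φ k)) t)) atTop (𝓝 (F t b)) :=
      ((hFcont t).continuousAt.tendsto).comp hbtend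
    have hFbP : F t b ≤ F t P := by
      have hrhs : Tendsto (fun k => F t P + γ (ns (φ k)) * ‖P‖ ^ 2) atTop (𝓝 (F t P)) := by
        have := (hγtend.mul_const (‖P‖ ^ 2)).const_add (F t P)
        simpa using this
      exact le_of_tendsto_of_tendsto' hFtend hrhs fun k => (hUP (ns (φ k))).2
    have hFb : ∀ y, F t b ≤ F t y := fun y => le_trans hFbP (hPM' y)
    have hbnorm : ‖b‖ ^ 2 ≤ ‖P‖ ^ 2 := by
      have : ‖b‖ ≤ ‖P‖ := by
        simpa [Metric.mem_closedBall, dist_eq_norm] using hbball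
      nlinarith [norm_nonneg b]
    have hbP : b = P := hPuniq b hFb hbnorm
    exact ⟨φ, hbP ▸ hbtend⟩
  set w : ℝ → V := fun t => Classical.choose (hlim t) with hw
  have hwspec : ∀ t, (∀ x, F t (w t) ≤ F t x) ∧ Tendsto (fun n => U n t) atTop (𝓝 (w t)) :=
    fun t => Classical.choose_spec (hlim t)
  have hwmeas : Measurable w :=
    measurable_of_tendsto_metrizable hUmeas (tendsto_pi_nhds.2 fun t => (hwspec t).2)
  refine ⟨w, hwmeas, fun t x => ?_⟩
  have := (hwspec t).1 x
  rw [hF] at this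
  exact this

end WideHelpers

/-- The real time interval `(0,T)` associated with a horizon `T ∈ (0,∞]`. -/
def wideTimeInterval (T : ENNReal) : Set ℝ :=
  {t : ℝ | 0 < t ∧ ENNReal.ofReal t < T}

/-- The admissible class `𝒦`: measurable `u : (0,T) → ℝ^d` with
`∫_0^T e^{-t/ε}|u(t)|^p dt < ∞` and `t ↦ e^{-t/ε} E(u(t))` integrable. -/
def wideAdmissible (d : ℕ) (p ε : ℝ) (E : EuclideanSpace ℝ (Fin d) → ℝ) (T : ENNReal) :
    Set (ℝ → EuclideanSpace ℝ (Fin d)) :=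
  {u | Measurable u
    ∧ (∫⁻ t in wideTimeInterval T, ENNReal.ofReal (Real.exp (-t / ε) * ‖u t‖ ^ p)) < ⊤
    ∧ MeasureTheory.IntegrableOn (fun t => Real.exp (-t / ε) * E (u t))
        (wideTimeInterval T)}

/-- The quasistatic WIDE functional `W^ε(u) = ∫_0^T e^{-t/ε} (E(u(t)) − f(t)·u(t)) dt`. -/
noncomputable def quasistaticWide (d : ℕ) (ε : ℝ) (E : EuclideanSpace ℝ (Fin d) → ℝ)
    (T : ENNReal) (f u : ℝ → EuclideanSpace ℝ (Fin d)) : ℝ :=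
  ∫ t in wideTimeInterval T, Real.exp (-t / ε) * (E (u t) - ⟪f t, u t⟫)


/-- quasistatic evolution, `ρ = 0`, `D = 0`. Let `p > 1` with conjugate
exponent `q = p/(p−1)`, `α > 0`, `ε > 0`, `T ∈ (0,∞]`, let `E : ℝ^d → ℝ` be convex with
`α|x|^p − 1/α ≤ E(x)`, and let `f` be measurable with `∫_0^T e^{-t/ε}|f|^q < ∞`. Then
(a) `W^ε` attains its minimum on `𝒦`, and (b) every minimizer `u` of `W^ε` on `𝒦`
satisfies `f(t) ∈ ∂E(u(t))` for a.e. `t ∈ (0,T)`, i.e.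
`E(v) ≥ E(u(t)) + f(t)·(v − u(t))` for all `v ∈ ℝ^d`. -/
theorem wide_quasistatic_evolution (d : ℕ) (p q α ε : ℝ)
    (hp : 1 < p) (hq : q = p / (p - 1)) (hα : 0 < α) (hε : 0 < ε)
    (T : ENNReal) (hT : 0 < T)
    (E : EuclideanSpace ℝ (Fin d) → ℝ) (hconv : ConvexOn ℝ Set.univ E)
    (hcoer : ∀ x : EuclideanSpace ℝ (Fin d), α * ‖x‖ ^ p - 1 / α ≤ E x)
    (f : ℝ → EuclideanSpace ℝ (Fin d)) (hfmeas : Measurable f)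
    (hf : (∫⁻ t in wideTimeInterval T, ENNReal.ofReal (Real.exp (-t / ε) * ‖f t‖ ^ q)) < ⊤) :
    (∃ u ∈ wideAdmissible d p ε E T, ∀ v ∈ wideAdmissible d p ε E T,
        quasistaticWide d ε E T f u ≤ quasistaticWide d ε E T f v)
      ∧ ∀ u ∈ wideAdmissible d p ε E T,
          (∀ v ∈ wideAdmissible d p ε E T,
            quasistaticWide d ε E T f u ≤ quasistaticWide d ε E T f v) →
          ∀ᵐ t ∂(MeasureTheory.volume.restrict (wideTimeInterval T)),
            ∀ v : EuclideanSpace ℝ (Fin d), E (u t) + ⟪f t, v - u t⟫ ≤ E v := by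
  classical
  have hpq : Real.HolderConjugate p q := (Real.holderConjugate_iff_eq_conjExponent hp).2 hq
  have hq1 : 1 < q := hpq.symm.lt
  have hp0 : 0 < p := hpq.pos
  have hEcont : Continuous E :=
    continuousOn_univ.1 (ConvexOn.continuousOn isOpen_univ hconv)
  -- the time interval
  have hImeas : MeasurableSet (wideTimeInterval T) := by
    have hIeq : wideTimeInterval T
        = Set.Ioi (0:ℝ) ∩ (fun t : ℝ => ENNReal.ofReal t) ⁻¹' Set.Iio T := by
      ext t; simp [wideTimeInterval, Set.mem_Ioi, Set.mem_Iio]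
    rw [hIeq]
    exact measurableSet_Ioi.inter (ENNReal.measurable_ofReal measurableSet_Iio)
  have hIsub : wideTimeInterval T ⊆ Set.Ioi (0:ℝ) := fun t ht => ht.1
  have hexp_meas : Measurable fun t : ℝ => Real.exp (-t / ε) :=
    Real.measurable_exp.comp (measurable_id.neg.div_const ε)
  have hexp_pos : ∀ t : ℝ, 0 < Real.exp (-t / ε) := fun t => Real.exp_pos _
  have hexp_int : IntegrableOn (fun t => Real.exp (-t / ε)) (wideTimeInterval T) := by
    have h0 : IntegrableOn (fun t : ℝ => Real.exp (-ε⁻¹ * t)) (Set.Ioi 0) :=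
      exp_neg_integrableOn_Ioi 0 (inv_pos.2 hε)
    have heq : (fun t : ℝ => Real.exp (-t / ε)) = fun t : ℝ => Real.exp (-ε⁻¹ * t) := by
      funext t; congr 1; ring
    rw [heq]
    exact h0.mono_set hIsub
  -- weighted Young inequality
  set lam : ℝ := (α * p / 2) ^ p⁻¹ with hlam
  have hlam_pos : 0 < lam := Real.rpow_pos_of_pos (by positivity) _
  have hlam_p : lam ^ p = α * p / 2 := by
    rw [hlam, ← Real.rpow_mul (by positivity : (0:ℝ) ≤ α * p / 2),
      inv_mul_cancel₀ hp0.ne', Real.rpow_one]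
  set CY : ℝ := (lam ^ q * q)⁻¹ with hCY
  have hlamq_pos : 0 < lam ^ q := Real.rpow_pos_of_pos hlam_pos q
  have hCY_pos : 0 < CY := inv_pos.2 (mul_pos hlamq_pos (by linarith))
  have hyoung : ∀ a b : ℝ, 0 ≤ a → 0 ≤ b → a * b ≤ CY * a ^ q + α / 2 * b ^ p := by
    intro a b ha hb
    have h := Real.young_inequality_of_nonneg (mul_nonneg hb hlam_pos.le)
      (div_nonneg ha hlam_pos.le) hpq
    have hab : b * lam * (a / lam) = a * b := by field_simp
    rw [hab, Real.mul_rpow hb hlam_pos.le, Real.div_rpow ha hlam_pos.le, hlam_p] at h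
    have e1 : b ^ p * (α * p / 2) / p = α / 2 * b ^ p := by field_simp
    have e2 : a ^ q / lam ^ q / q = CY * a ^ q := by rw [hCY]; field_simp
    rw [e1, e2] at h
    linarith
  -- coercivity of the reduced energy
  have hbd : ∀ (t : ℝ) (x : EuclideanSpace ℝ (Fin d)),
      α / 2 * ‖x‖ ^ p - (CY * ‖f t‖ ^ q + 1 / α) ≤ E x - ⟪f t, x⟫ := by
    intro t x
    have h1 := hcoer x
    have h2 : ⟪f t, x⟫ ≤ ‖f t‖ * ‖x‖ := real_inner_le_norm _ _
    have h3 := hyoung ‖f t‖ ‖x‖ (norm_nonneg _) (norm_nonneg _)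
    linarith
  -- measurable pointwise minimizer
  obtain ⟨w, hwmeas, hwmin⟩ := wide_selection p (α / 2) hp.le (by positivity) E hconv hEcont
    f hfmeas (fun t => CY * ‖f t‖ ^ q + 1 / α) hbd
  -- integrability toolkit
  have hintOn : ∀ g : ℝ → ℝ, Measurable g → (∀ t, 0 ≤ g t) →
      (∫⁻ t in wideTimeInterval T, ENNReal.ofReal (g t)) < ⊤ →
      IntegrableOn g (wideTimeInterval T) := fun g hg h0 hfin =>
    ⟨hg.aestronglyMeasurable, (hasFiniteIntegral_iff_ofReal (ae_of_all _ h0)).2 hfin⟩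
  have hrpow_meas : ∀ (u : ℝ → EuclideanSpace ℝ (Fin d)) (r : ℝ), Measurable u → 0 ≤ r →
      Measurable fun t => ‖u t‖ ^ r := fun u r hu hr =>
    (Real.continuous_rpow_const hr).measurable.comp hu.norm
  have int_f : IntegrableOn (fun t => Real.exp (-t / ε) * ‖f t‖ ^ q) (wideTimeInterval T) :=
    hintOn _ (hexp_meas.mul (hrpow_meas f q hfmeas (by linarith)))
      (fun t => mul_nonneg (hexp_pos t).le (Real.rpow_nonneg (norm_nonneg _) q)) hf
  have int_adm : ∀ u, u ∈ wideAdmissible d p ε E T →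
      IntegrableOn (fun t => Real.exp (-t / ε) * ‖u t‖ ^ p) (wideTimeInterval T) := by
    intro u hu
    exact hintOn _ (hexp_meas.mul (hrpow_meas u p hu.1 hp0.le))
      (fun t => mul_nonneg (hexp_pos t).le (Real.rpow_nonneg (norm_nonneg _) p)) hu.2.1
  have int_inner : ∀ u : ℝ → EuclideanSpace ℝ (Fin d), Measurable u →
      IntegrableOn (fun t => Real.exp (-t / ε) * ‖u t‖ ^ p) (wideTimeInterval T) →
      IntegrableOn (fun t => Real.exp (-t / ε) * ⟪f t, u t⟫) (wideTimeInterval T) := by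
    intro u humeas hup
    have hmeas : Measurable fun t => Real.exp (-t / ε) * ⟪f t, u t⟫ :=
      hexp_meas.mul (Measurable.inner hfmeas humeas)
    refine Integrable.mono' ((int_f.div_const q).add (hup.div_const p))
      hmeas.aestronglyMeasurable (ae_of_all _ fun t => ?_)
    have hy := Real.young_inequality_of_nonneg (norm_nonneg (f t)) (norm_nonneg (u t)) hpq.symm
    have habs : |⟪f t, u t⟫| ≤ ‖f t‖ * ‖u t‖ := abs_real_inner_le_norm _ _
    rw [Real.norm_eq_abs, abs_mul, abs_of_pos (hexp_pos t)]
    calc Real.exp (-t / ε) * |⟪f t, u t⟫|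
        ≤ Real.exp (-t / ε) * (‖f t‖ ^ q / q + ‖u t‖ ^ p / p) :=
          mul_le_mul_of_nonneg_left (le_trans habs (by linarith)) (hexp_pos t).le
    _ = Real.exp (-t / ε) * ‖f t‖ ^ q / q + Real.exp (-t / ε) * ‖u t‖ ^ p / p := by ring
  have Wint : ∀ u, u ∈ wideAdmissible d p ε E T →
      IntegrableOn (fun t => Real.exp (-t / ε) * (E (u t) - ⟪f t, u t⟫))
        (wideTimeInterval T) := by
    intro u hu
    have h1 : (fun t => Real.exp (-t / ε) * (E (u t) - ⟪f t, u t⟫))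
        = fun t => Real.exp (-t / ε) * E (u t) - Real.exp (-t / ε) * ⟪f t, u t⟫ := by
      funext t; ring
    rw [h1]
    exact hu.2.2.sub (int_inner u hu.1 (int_adm u hu))
  -- admissibility of the selection w
  have hwbound : ∀ t : ℝ, ‖w t‖ ^ p
      ≤ 2 / α * (E 0 + 1 / α) + 2 / α * CY * ‖f t‖ ^ q := by
    intro t
    have h1 := hwmin t 0
    rw [inner_zero_right] at h1
    have h2 := hcoer (w t)
    have h3 : ⟪f t, w t⟫ ≤ ‖f t‖ * ‖w t‖ := real_inner_le_norm _ _
    have h4 := hyoung ‖f t‖ ‖w t‖ (norm_nonneg _) (norm_nonneg _)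
    have h5 : α / 2 * ‖w t‖ ^ p ≤ E 0 + 1 / α + CY * ‖f t‖ ^ q := by linarith
    have h6 := mul_le_mul_of_nonneg_left h5 (le_of_lt (show (0:ℝ) < 2 / α by positivity))
    calc ‖w t‖ ^ p = 2 / α * (α / 2 * ‖w t‖ ^ p) := by field_simp
    _ ≤ 2 / α * (E 0 + 1 / α + CY * ‖f t‖ ^ q) := h6
    _ = 2 / α * (E 0 + 1 / α) + 2 / α * CY * ‖f t‖ ^ q := by ring
  have int_wp : IntegrableOn (fun t => Real.exp (-t / ε) * ‖w t‖ ^ p) (wideTimeInterval T) := by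
    have hmeas := hexp_meas.mul (hrpow_meas w p hwmeas hp0.le)
    refine Integrable.mono'
      ((hexp_int.const_mul (2 / α * (E 0 + 1 / α))).add (int_f.const_mul (2 / α * CY)))
      hmeas.aestronglyMeasurable (ae_of_all _ fun t => ?_)
    rw [Real.norm_eq_abs, abs_mul, abs_of_pos (hexp_pos t),
      abs_of_nonneg (Real.rpow_nonneg (norm_nonneg _) p)]
    calc Real.exp (-t / ε) * ‖w t‖ ^ p
        ≤ Real.exp (-t / ε) * (2 / α * (E 0 + 1 / α) + 2 / α * CY * ‖f t‖ ^ q) :=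
          mul_le_mul_of_nonneg_left (hwbound t) (hexp_pos t).le
    _ = 2 / α * (E 0 + 1 / α) * Real.exp (-t / ε)
          + 2 / α * CY * (Real.exp (-t / ε) * ‖f t‖ ^ q) := by ring
  have hwlint : (∫⁻ t in wideTimeInterval T,
      ENNReal.ofReal (Real.exp (-t / ε) * ‖w t‖ ^ p)) < ⊤ :=
    (hasFiniteIntegral_iff_ofReal (ae_of_all _ fun t =>
      mul_nonneg (hexp_pos t).le (Real.rpow_nonneg (norm_nonneg _) p))).1 int_wp.2
  have int_wE : IntegrableOn (fun t => Real.exp (-t / ε) * E (w t)) (wideTimeInterval T) := by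
    have hmeas : Measurable fun t => Real.exp (-t / ε) * E (w t) :=
      hexp_meas.mul (hEcont.measurable.comp hwmeas)
    have hbd2 : ∀ t, |E (w t)| ≤ |E 0| + 1 / α + α * ‖w t‖ ^ p + CY * ‖f t‖ ^ q := by
      intro t
      have h1 := hwmin t 0
      rw [inner_zero_right] at h1
      have h2 := hcoer (w t)
      have h3 : ⟪f t, w t⟫ ≤ ‖f t‖ * ‖w t‖ := real_inner_le_norm _ _
      have h4 := hyoung ‖f t‖ ‖w t‖ (norm_nonneg _) (norm_nonneg _)
      have hnn0 : 0 ≤ ‖w t‖ ^ p := Real.rpow_nonneg (norm_nonneg _) p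
      have hnn1 : 0 ≤ ‖f t‖ ^ q := Real.rpow_nonneg (norm_nonneg _) q
      have hE0 : E 0 ≤ |E 0| := le_abs_self _
      rw [abs_le]
      constructor
      · nlinarith [abs_nonneg (E 0), mul_nonneg hCY_pos.le hnn1, mul_nonneg hα.le hnn0]
      · have hhalf : α / 2 * ‖w t‖ ^ p + α / 2 * ‖w t‖ ^ p = α * ‖w t‖ ^ p := by ring
        have hh0 : 0 ≤ α / 2 * ‖w t‖ ^ p := mul_nonneg (by positivity) hnn0
        have hA0 : 0 ≤ 1 / α := by positivity
        linarith
    refine Integrable.mono'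
      (((hexp_int.const_mul (|E 0| + 1 / α)).add (int_wp.const_mul α)).add
        (int_f.const_mul CY))
      hmeas.aestronglyMeasurable (ae_of_all _ fun t => ?_)
    rw [Real.norm_eq_abs, abs_mul, abs_of_pos (hexp_pos t)]
    calc Real.exp (-t / ε) * |E (w t)|
        ≤ Real.exp (-t / ε) * (|E 0| + 1 / α + α * ‖w t‖ ^ p + CY * ‖f t‖ ^ q) :=
          mul_le_mul_of_nonneg_left (hbd2 t) (hexp_pos t).le
    _ = (|E 0| + 1 / α) * Real.exp (-t / ε) + α * (Real.exp (-t / ε) * ‖w t‖ ^ p)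
          + CY * (Real.exp (-t / ε) * ‖f t‖ ^ q) := by ring
  have hwadm : w ∈ wideAdmissible d p ε E T := ⟨hwmeas, hwlint, int_wE⟩
  -- part (a)
  have hmin_w : ∀ v ∈ wideAdmissible d p ε E T,
      quasistaticWide d ε E T f w ≤ quasistaticWide d ε E T f v := by
    intro v hv
    refine setIntegral_mono_on (Wint w hwadm) (Wint v hv) hImeas fun t ht => ?_
    exact mul_le_mul_of_nonneg_left (hwmin t (v t)) (hexp_pos t).le
  refine ⟨⟨w, hwadm, hmin_w⟩, ?_⟩
  -- part (b)
  intro u hu humin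
  set A : Set ℝ := {t | E (w t) - ⟪f t, w t⟫ < E (u t) - ⟪f t, u t⟫} with hA
  have hAmeas : MeasurableSet A := by
    apply measurableSet_lt
    · exact (hEcont.measurable.comp hwmeas).sub (Measurable.inner hfmeas hwmeas)
    · exact (hEcont.measurable.comp hu.1).sub (Measurable.inner hfmeas hu.1)
  set v : ℝ → EuclideanSpace ℝ (Fin d) := A.piecewise w u with hv
  have hvmeas : Measurable v := Measurable.piecewise hAmeas hwmeas hu.1
  have hvw : ∀ t, t ∈ A → v t = w t := fun t ht => by simp [hv, Set.piecewise, ht]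
  have hvu : ∀ t, t ∉ A → v t = u t := fun t ht => by simp [hv, Set.piecewise, ht]
  have hvcases : ∀ t, v t = w t ∨ v t = u t := fun t => by
    by_cases ht : t ∈ A
    · exact Or.inl (hvw t ht)
    · exact Or.inr (hvu t ht)
  have hvadm : v ∈ wideAdmissible d p ε E T := by
    refine ⟨hvmeas, ?_, ?_⟩
    · have hle : ∀ t, ENNReal.ofReal (Real.exp (-t / ε) * ‖v t‖ ^ p)
          ≤ ENNReal.ofReal (Real.exp (-t / ε) * ‖u t‖ ^ p)
            + ENNReal.ofReal (Real.exp (-t / ε) * ‖w t‖ ^ p) := by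
        intro t
        rcases hvcases t with h | h <;> rw [h]
        · exact le_add_self
        · exact self_le_add_right _ _
      calc (∫⁻ t in wideTimeInterval T, ENNReal.ofReal (Real.exp (-t / ε) * ‖v t‖ ^ p))
          ≤ ∫⁻ t in wideTimeInterval T,
              (ENNReal.ofReal (Real.exp (-t / ε) * ‖u t‖ ^ p)
                + ENNReal.ofReal (Real.exp (-t / ε) * ‖w t‖ ^ p)) :=
            lintegral_mono fun t => hle t
      _ = (∫⁻ t in wideTimeInterval T, ENNReal.ofReal (Real.exp (-t / ε) * ‖u t‖ ^ p))
            + ∫⁻ t in wideTimeInterval T, ENNReal.ofReal (Real.exp (-t / ε) * ‖w t‖ ^ p) :=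
            lintegral_add_left (ENNReal.measurable_ofReal.comp
              (hexp_meas.mul (hrpow_meas u p hu.1 hp0.le))) _
      _ < ⊤ := ENNReal.add_lt_top.2 ⟨hu.2.1, hwlint⟩
    · have hmeas : Measurable fun t => Real.exp (-t / ε) * E (v t) :=
        hexp_meas.mul (hEcont.measurable.comp hvmeas)
      refine Integrable.mono' (hu.2.2.abs.add int_wE.abs) hmeas.aestronglyMeasurable
        (ae_of_all _ fun t => ?_)
      rcases hvcases t with h | h <;> rw [Real.norm_eq_abs, h]
      · exact le_add_of_nonneg_left (abs_nonneg _)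
      · exact le_add_of_nonneg_right (abs_nonneg _)
  have hWle := humin v hvadm
  set φ : ℝ → ℝ := fun t => Real.exp (-t / ε) * (E (u t) - ⟪f t, u t⟫)
      - Real.exp (-t / ε) * (E (v t) - ⟪f t, v t⟫) with hφ
  have hφnonneg : ∀ t, 0 ≤ φ t := by
    intro t
    by_cases ht : t ∈ A
    · have h0 := hvw t ht
      have h1 : E (w t) - ⟪f t, w t⟫ ≤ E (u t) - ⟪f t, u t⟫ := le_of_lt ht
      have h2 := mul_le_mul_of_nonneg_left h1 (hexp_pos t).le
      simp only [hφ, h0]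
      linarith
    · have h0 := hvu t ht
      simp only [hφ, h0]
      linarith
  have hφint : Integrable φ (volume.restrict (wideTimeInterval T)) :=
    (Wint u hu).sub (Wint v hvadm)
  have hφint0 : (∫ t in wideTimeInterval T, φ t) ≤ 0 := by
    have hsub := integral_sub (Wint u hu) (Wint v hvadm)
    have : (∫ t in wideTimeInterval T, φ t)
        = quasistaticWide d ε E T f u - quasistaticWide d ε E T f v := hsub
    rw [this]
    linarith [hWle]
  have hφ0 : (∫ t in wideTimeInterval T, φ t) = 0 :=
    le_antisymm hφint0 (integral_nonneg fun t => hφnonneg t)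
  have hae := (integral_eq_zero_iff_of_nonneg hφnonneg hφint).1 hφ0
  filter_upwards [hae] with t htφ
  intro x
  have htA : t ∉ A := by
    intro htA
    have h0 := hvw t htA
    have hlt : E (w t) - ⟪f t, w t⟫ < E (u t) - ⟪f t, u t⟫ := htA
    have h2 := mul_lt_mul_of_pos_left hlt (hexp_pos t)
    have hpos : 0 < φ t := by simp only [hφ, h0]; linarith
    have : φ t = 0 := htφ
    linarith
  have h1 : ¬(E (w t) - ⟪f t, w t⟫ < E (u t) - ⟪f t, u t⟫) := htA
  push_neg at h1
  have h2 := hwmin t x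
  have h3 : ⟪f t, x - u t⟫ = ⟪f t, x⟫ - ⟪f t, u t⟫ := inner_sub_right _ _ _
  linarith
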